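/- For the metric g_{(r₁,r₂)} on Sp(2) with r₁ + r₂ ≤ 2 and the orthonormal frame e₁ = √(2/r₁)·diag-block of i in the upper-left corner etc., the sectional curvature K(e₁, e_p) equals 2/r₁ for p = 2,3; equals r₁/2 for p = 4,5,6,7; and equals 0 for p = 8,9,10. Consequently Ric(e₁) = 2r₁ + 4/r₁. -/

import Mathlib

open Quaternion

/-- The quaternion unit i. -/
def qI : ℍ[ℝ] := ⟨0, 1, 0, 0⟩
/-- The quaternion unit j. -/
def qJ : ℍ[ℝ] := ⟨0, 0, 1, 0⟩
/-- The quaternion unit k. -/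
def qK : ℍ[ℝ] := ⟨0, 0, 0, 1⟩

/-- The sectional curvature expression K(ξ₁,ξ₂) of the left-invariant metric
g_{(r₁,r₂)} on Sp(2), in terms of the components of ξᵢ = ((xᵢ,yᵢ),(-conj yᵢ,zᵢ)). -/
noncomputable def sp2K (r₁ r₂ : ℝ) (x₁ y₁ z₁ x₂ y₂ z₂ : ℍ[ℝ]) : ℝ :=
  let α₁ : ℍ[ℝ] := y₂ * star y₁ - y₁ * star y₂
  let α₂ : ℍ[ℝ] := star y₂ * y₁ - star y₁ * y₂
  let β₁ : ℍ[ℝ] := x₁ * x₂ - x₂ * x₁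
  let β₂ : ℍ[ℝ] := z₁ * z₂ - z₂ * z₁
  let γ₁ : ℍ[ℝ] := x₁ * y₂ - x₂ * y₁
  let γ₂ : ℍ[ℝ] := y₁ * z₂ - y₂ * z₁
  (1 / 4) * ‖r₁ • γ₁ + r₂ • γ₂‖ ^ 2 + (r₁ / 8) * ‖β₁ + (3 - 2 * r₁) • α₁‖ ^ 2
    + (r₂ / 8) * ‖β₂ + (3 - 2 * r₂) • α₂‖ ^ 2
    + (1 / 2) * ((1 - r₁) ^ 3 + (1 - r₂) ^ 3) * ‖α₁‖ ^ 2

@[simp] private lemma qI_re : qI.re = 0 := rfl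
@[simp] private lemma qI_imI : qI.imI = 1 := rfl
@[simp] private lemma qI_imJ : qI.imJ = 0 := rfl
@[simp] private lemma qI_imK : qI.imK = 0 := rfl
@[simp] private lemma qJ_re : qJ.re = 0 := rfl
@[simp] private lemma qJ_imI : qJ.imI = 0 := rfl
@[simp] private lemma qJ_imJ : qJ.imJ = 1 := rfl
@[simp] private lemma qJ_imK : qJ.imK = 0 := rfl
@[simp] private lemma qK_re : qK.re = 0 := rfl
@[simp] private lemma qK_imI : qK.imI = 0 := rfl
@[simp] private lemma qK_imJ : qK.imJ = 0 := rfl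
@[simp] private lemma qK_imK : qK.imK = 1 := rfl

private lemma quat_nsq (a : ℍ[ℝ]) : ‖a‖ ^ 2 = a.re ^ 2 + a.imI ^ 2 + a.imJ ^ 2 + a.imK ^ 2 := by
  rw [sq, ← normSq_eq_norm_mul_self, normSq_def']

/-- Sectional curvatures K(e₁,e_p) for the orthonormal frame of (Sp(2), g_{(r₁,r₂)}),
and the resulting Ricci curvature Ric(e₁) = 2r₁ + 4/r₁. -/
theorem sp2_ric_e1 (r₁ r₂ : ℝ) (h₁ : 0 < r₁) (h₂ : 0 < r₂) (h : r₁ + r₂ ≤ 2) :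
    (sp2K r₁ r₂ (Real.sqrt (2 / r₁) • qI) 0 0 (Real.sqrt (2 / r₁) • qJ) 0 0 = 2 / r₁) ∧
    (sp2K r₁ r₂ (Real.sqrt (2 / r₁) • qI) 0 0 (Real.sqrt (2 / r₁) • qK) 0 0 = 2 / r₁) ∧
    (sp2K r₁ r₂ (Real.sqrt (2 / r₁) • qI) 0 0 0 1 0 = r₁ / 2) ∧
    (sp2K r₁ r₂ (Real.sqrt (2 / r₁) • qI) 0 0 0 qI 0 = r₁ / 2) ∧
    (sp2K r₁ r₂ (Real.sqrt (2 / r₁) • qI) 0 0 0 qJ 0 = r₁ / 2) ∧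
    (sp2K r₁ r₂ (Real.sqrt (2 / r₁) • qI) 0 0 0 qK 0 = r₁ / 2) ∧
    (sp2K r₁ r₂ (Real.sqrt (2 / r₁) • qI) 0 0 0 0 (Real.sqrt (2 / r₂) • qI) = 0) ∧
    (sp2K r₁ r₂ (Real.sqrt (2 / r₁) • qI) 0 0 0 0 (Real.sqrt (2 / r₂) • qJ) = 0) ∧
    (sp2K r₁ r₂ (Real.sqrt (2 / r₁) • qI) 0 0 0 0 (Real.sqrt (2 / r₂) • qK) = 0) ∧
    (sp2K r₁ r₂ (Real.sqrt (2 / r₁) • qI) 0 0 (Real.sqrt (2 / r₁) • qJ) 0 0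
      + sp2K r₁ r₂ (Real.sqrt (2 / r₁) • qI) 0 0 (Real.sqrt (2 / r₁) • qK) 0 0
      + sp2K r₁ r₂ (Real.sqrt (2 / r₁) • qI) 0 0 0 1 0
      + sp2K r₁ r₂ (Real.sqrt (2 / r₁) • qI) 0 0 0 qI 0
      + sp2K r₁ r₂ (Real.sqrt (2 / r₁) • qI) 0 0 0 qJ 0
      + sp2K r₁ r₂ (Real.sqrt (2 / r₁) • qI) 0 0 0 qK 0
      + sp2K r₁ r₂ (Real.sqrt (2 / r₁) • qI) 0 0 0 0 (Real.sqrt (2 / r₂) • qI)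
      + sp2K r₁ r₂ (Real.sqrt (2 / r₁) • qI) 0 0 0 0 (Real.sqrt (2 / r₂) • qJ)
      + sp2K r₁ r₂ (Real.sqrt (2 / r₁) • qI) 0 0 0 0 (Real.sqrt (2 / r₂) • qK)
      = 2 * r₁ + 4 / r₁) := by
  have hs : Real.sqrt (2 / r₁) ^ 2 = 2 / r₁ := Real.sq_sqrt (by positivity)
  have hr : r₁ ≠ 0 := ne_of_gt h₁
  refine ⟨?_, ?_, ?_, ?_, ?_, ?_, ?_, ?_, ?_, ?_⟩ <;>
  · generalize Real.sqrt (2 / r₁) = s at hs ⊢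
    have h4 : s * s = 2 / r₁ := by rw [← hs]; ring
    simp only [sp2K, quat_nsq]
    simp [re_mul, imI_mul, imJ_mul, imK_mul, re_smul, imI_smul, imJ_smul, imK_smul]
    try rw [h4]
    try simp [h4]
    try field_simp
    try ring
    try rw [hs]
    try field_simp
    try ring
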